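/- For any g ∈ GL_d(R) with singular values σ_1 ≥ ... ≥ σ_d and any nonzero x ∈ R^d, one has ∠(x̄, V_g^-)·∠(gx̄, V_g^+) ≤ σ_{r+1}(g)/σ_r(g). -/

import Mathlib

noncomputable section

abbrev Euc (d : ℕ) := EuclideanSpace ℝ (Fin d)

/-- `∠(x̄, W) = ‖π_{W^⊥}(x)‖ / ‖x‖`, the sine of the angle between the line `ℝx` and `W`. -/
def angLine {d : ℕ} (x : Euc d) (W : Submodule ℝ (Euc d)) : ℝ :=
  ‖(Wᗮ.orthogonalProjectionOnto x : Euc d)‖ / ‖x‖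

/-- `∠(ȳ, V) = dist(y/‖y‖, V)`. -/
def angDist {d : ℕ} (y : Euc d) (V : Submodule ℝ (Euc d)) : ℝ :=
  Metric.infDist (‖y‖⁻¹ • y) (V : Set (Euc d))

/-- The span of the first `r` standard basis vectors of `ℝ^d`. -/
def stdSpanLT (d r : ℕ) : Submodule ℝ (Euc d) :=
  Submodule.span ℝ ((fun i => EuclideanSpace.single i (1 : ℝ)) '' {i : Fin d | (i : ℕ) < r})

/-- The span of the standard basis vectors `e_i` of `ℝ^d` with `r ≤ i`. -/
def stdSpanGE (d r : ℕ) : Submodule ℝ (Euc d) :=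
  Submodule.span ℝ ((fun i => EuclideanSpace.single i (1 : ℝ)) '' {i : Fin d | r ≤ (i : ℕ)})

namespace Stmt3Aux

variable {d r : ℕ}

lemma euc_sum (v : Euc d) : v = ∑ i, v i • EuclideanSpace.single i (1:ℝ) := by
  have := (EuclideanSpace.basisFun (Fin d) ℝ).sum_repr v
  simp only [EuclideanSpace.basisFun_repr, EuclideanSpace.basisFun_apply] at this
  exact this.symm

lemma mem_stdSpanLT_iff {v : Euc d} :
    v ∈ stdSpanLT d r ↔ ∀ i : Fin d, r ≤ (i:ℕ) → v i = 0 := by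
  constructor
  · intro hv
    induction hv using Submodule.span_induction with
    | mem u hu =>
      obtain ⟨i, hi, rfl⟩ := hu
      intro j hj
      have hij : j ≠ i := by rintro rfl; simp only [Set.mem_setOf_eq] at hi; omega
      simp [EuclideanSpace.single_apply, hij]
    | zero => simp
    | add u w _ _ hu hw => intro j hj; simp [hu j hj, hw j hj]
    | smul c u _ hu => intro j hj; simp [hu j hj]
  · intro h
    rw [euc_sum v]
    refine Submodule.sum_mem _ fun i _ => ?_
    by_cases hi : (i:ℕ) < r
    · exact Submodule.smul_mem _ _ (Submodule.subset_span ⟨i, hi, rfl⟩)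
    · rw [h i (by omega)]; simp

lemma mem_stdSpanGE_iff {v : Euc d} :
    v ∈ stdSpanGE d r ↔ ∀ i : Fin d, (i:ℕ) < r → v i = 0 := by
  constructor
  · intro hv
    induction hv using Submodule.span_induction with
    | mem u hu =>
      obtain ⟨i, hi, rfl⟩ := hu
      intro j hj
      have hij : j ≠ i := by rintro rfl; simp only [Set.mem_setOf_eq] at hi; omega
      simp [EuclideanSpace.single_apply, hij]
    | zero => simp
    | add u w _ _ hu hw => intro j hj; simp [hu j hj, hw j hj]
    | smul c u _ hu => intro j hj; simp [hu j hj]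
  · intro h
    rw [euc_sum v]
    refine Submodule.sum_mem _ fun i _ => ?_
    by_cases hi : r ≤ (i:ℕ)
    · exact Submodule.smul_mem _ _ (Submodule.subset_span ⟨i, hi, rfl⟩)
    · rw [h i (by omega)]; simp

lemma stdSpanLT_orthogonal : (stdSpanLT d r)ᗮ = stdSpanGE d r := by
  ext v
  rw [Submodule.mem_orthogonal, mem_stdSpanGE_iff]
  constructor
  · intro h i hi
    simpa [EuclideanSpace.inner_single_left] using
      h _ (Submodule.subset_span ⟨i, hi, rfl⟩)
  · intro h u hu
    rw [mem_stdSpanLT_iff] at hu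
    rw [PiLp.inner_apply]
    refine Finset.sum_eq_zero fun i _ => ?_
    by_cases hi : (i:ℕ) < r
    · simp [h i hi]
    · simp [hu i (by omega)]

lemma stdSpanGE_orthogonal : (stdSpanGE d r)ᗮ = stdSpanLT d r := by
  ext v
  rw [Submodule.mem_orthogonal, mem_stdSpanLT_iff]
  constructor
  · intro h i hi
    simpa [EuclideanSpace.inner_single_left] using
      h _ (Submodule.subset_span ⟨i, hi, rfl⟩)
  · intro h u hu
    rw [mem_stdSpanGE_iff] at hu
    rw [PiLp.inner_apply]
    refine Finset.sum_eq_zero fun i _ => ?_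
    by_cases hi : (i:ℕ) < r
    · simp [hu i hi]
    · simp [h i (by omega)]

lemma map_orth (e : Euc d ≃ₗᵢ[ℝ] Euc d) (K : Submodule ℝ (Euc d)) :
    (K.map (e.toLinearEquiv : Euc d →ₗ[ℝ] Euc d))ᗮ
      = Kᗮ.map (e.toLinearEquiv : Euc d →ₗ[ℝ] Euc d) := by
  ext v
  simp only [Submodule.mem_orthogonal, Submodule.mem_map, LinearEquiv.coe_coe,
    LinearIsometryEquiv.coe_toLinearEquiv]
  constructor
  · intro h
    refine ⟨e.symm v, fun u hu => ?_, e.apply_symm_apply v⟩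
    have h2 := h (e u) ⟨u, hu, rfl⟩
    have h3 : (inner ℝ (e u) (e (e.symm v)) : ℝ) = inner ℝ u (e.symm v) := e.inner_map_map _ _
    rw [e.apply_symm_apply] at h3
    exact h3.symm.trans h2
  · rintro ⟨w, hw, rfl⟩ u ⟨u', hu', rfl⟩
    rw [e.inner_map_map]
    exact hw u' hu'

lemma projLT_eq (y : Euc d) :
    ((stdSpanLT d r).orthogonalProjectionOnto y : Euc d)
      = (WithLp.equiv 2 _).symm (fun i : Fin d => if (i:ℕ) < r then y i else 0) := by
  rw [Submodule.coe_orthogonalProjectionOnto_apply]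
  apply Submodule.eq_starProjection_of_mem_of_inner_eq_zero
  · rw [mem_stdSpanLT_iff]
    intro i hi
    rw [WithLp.equiv_symm_apply, PiLp.toLp_apply, if_neg (by omega)]
  · intro w hw
    rw [mem_stdSpanLT_iff] at hw
    rw [PiLp.inner_apply]
    refine Finset.sum_eq_zero fun i _ => ?_
    by_cases hi : (i:ℕ) < r
    · simp [PiLp.sub_apply, WithLp.equiv_symm_apply, PiLp.toLp_apply, hi]
    · simp [hw i (by omega)]

lemma projGE_eq (y : Euc d) :
    ((stdSpanGE d r).orthogonalProjectionOnto y : Euc d)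
      = (WithLp.equiv 2 _).symm (fun i : Fin d => if r ≤ (i:ℕ) then y i else 0) := by
  rw [Submodule.coe_orthogonalProjectionOnto_apply]
  apply Submodule.eq_starProjection_of_mem_of_inner_eq_zero
  · rw [mem_stdSpanGE_iff]
    intro i hi
    rw [WithLp.equiv_symm_apply, PiLp.toLp_apply, if_neg (by omega)]
  · intro w hw
    rw [mem_stdSpanGE_iff] at hw
    rw [PiLp.inner_apply]
    refine Finset.sum_eq_zero fun i _ => ?_
    by_cases hi : r ≤ (i:ℕ)
    · simp [PiLp.sub_apply, WithLp.equiv_symm_apply, PiLp.toLp_apply, hi]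
    · simp [hw i (by omega)]

lemma norm_eq' (v : Euc d) : ‖v‖ = Real.sqrt (∑ i, v i ^ 2) := by
  rw [EuclideanSpace.norm_eq]
  congr 1
  exact Finset.sum_congr rfl fun i _ => by rw [Real.norm_eq_abs, sq_abs]

lemma starProj_congr {K K' : Submodule ℝ (Euc d)} (h : K = K') (u : Euc d) :
    K.starProjection u = K'.starProjection u := by
  subst h; rfl

lemma infDist_eq_norm_proj (K : Submodule ℝ (Euc d)) (u : Euc d) :
    Metric.infDist u (K : Set (Euc d)) = ‖(Kᗮ.orthogonalProjectionOnto u : Euc d)‖ := by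
  rw [Metric.infDist_eq_iInf, Submodule.coe_orthogonalProjectionOnto_apply,
    Submodule.starProjection_orthogonal_val, Submodule.starProjection_minimal]
  simp_rw [dist_eq_norm]
  rfl

end Stmt3Aux

open Stmt3Aux

theorem stmt3 {d r : ℕ} (hr : 0 < r) (hrd : r < d)
    (g : Euc d →ₗ[ℝ] Euc d) (hg : Function.Bijective g)
    -- Cartan decomposition `g = k ∘ diag σ ∘ l` with `σ_1 ≥ ... ≥ σ_d > 0`
    (k l : Euc d ≃ₗᵢ[ℝ] Euc d) (σ : Fin d → ℝ) (hσmono : Antitone σ) (hσpos : ∀ i, 0 < σ i)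
    (hcartan : ∀ x : Euc d, ∀ i : Fin d, k.symm (g x) i = σ i * l x i)
    (x : Euc d) (hx : x ≠ 0) :
    angLine x ((stdSpanGE d r).map (l.symm.toLinearEquiv : Euc d →ₗ[ℝ] Euc d)) *
        angDist (g x) ((stdSpanLT d r).map (k.toLinearEquiv : Euc d →ₗ[ℝ] Euc d)) ≤
      σ ⟨r, hrd⟩ / σ ⟨r - 1, by omega⟩ := by
  classical
  set s1 : ℝ := σ ⟨r - 1, by omega⟩ with hs1
  set s2 : ℝ := σ ⟨r, hrd⟩ with hs2
  have hs1pos : 0 < s1 := hσpos _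
  have hs2pos : 0 < s2 := hσpos _
  set y : Euc d := l x with hydef
  set z : Euc d := k.symm (g x) with hzdef
  have hz : ∀ i, z i = σ i * y i := fun i => hcartan x i
  have hy0 : y ≠ 0 := fun h => hx (l.injective (h.trans (map_zero l).symm))
  have hgx0 : g x ≠ 0 := fun h => hx (hg.1 (by simpa using h))
  have hz0 : z ≠ 0 := fun h => hgx0 (k.symm.injective (h.trans (map_zero k.symm).symm))
  have hnyx : ‖x‖ = ‖y‖ := (l.norm_map x).symm
  have hnz : ‖g x‖ = ‖z‖ := (k.symm.norm_map (g x)).symm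
  -- rewrite the first angle
  have h1 : angLine x ((stdSpanGE d r).map (l.symm.toLinearEquiv : Euc d →ₗ[ℝ] Euc d))
      = ‖((stdSpanLT d r).orthogonalProjectionOnto y : Euc d)‖ / ‖y‖ := by
    have hWc : ((stdSpanGE d r).map (l.symm.toLinearEquiv : Euc d →ₗ[ℝ] Euc d))ᗮ
        = (stdSpanLT d r).map (l.symm.toLinearEquiv : Euc d →ₗ[ℝ] Euc d) := by
      rw [map_orth, stdSpanGE_orthogonal]
    simp only [angLine, Submodule.coe_orthogonalProjectionOnto_apply]
    rw [starProj_congr hWc x,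
      Submodule.starProjection_map_apply, hnyx]
    simp only [LinearIsometryEquiv.norm_map, LinearIsometryEquiv.symm_symm, ← hydef]
  -- rewrite the second angle
  have h2 : angDist (g x) ((stdSpanLT d r).map (k.toLinearEquiv : Euc d →ₗ[ℝ] Euc d))
      = ‖((stdSpanGE d r).orthogonalProjectionOnto z : Euc d)‖ / ‖z‖ := by
    have hKc : ((stdSpanLT d r).map (k.toLinearEquiv : Euc d →ₗ[ℝ] Euc d))ᗮ
        = (stdSpanGE d r).map (k.toLinearEquiv : Euc d →ₗ[ℝ] Euc d) := by
      rw [map_orth, stdSpanLT_orthogonal]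
    rw [angDist, infDist_eq_norm_proj]
    simp only [Submodule.coe_orthogonalProjectionOnto_apply]
    rw [starProj_congr hKc,
      Submodule.starProjection_map_apply, LinearIsometryEquiv.norm_map,
      LinearIsometryEquiv.map_smul, ← hzdef, map_smul]
    rw [norm_smul, norm_inv, norm_norm, hnz, inv_mul_eq_div]
  rw [h1, h2]
  -- coordinate expressions for the four norms
  have hay : ‖((stdSpanLT d r).orthogonalProjectionOnto y : Euc d)‖
      = Real.sqrt (∑ i : Fin d, if (i:ℕ) < r then y i ^ 2 else 0) := by
    rw [projLT_eq, norm_eq']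
    congr 1
    refine Finset.sum_congr rfl fun i _ => ?_
    rw [WithLp.equiv_symm_apply, PiLp.toLp_apply]
    by_cases hi : (i:ℕ) < r <;> simp [hi]
  have hbz : ‖((stdSpanGE d r).orthogonalProjectionOnto z : Euc d)‖
      = Real.sqrt (∑ i : Fin d, if r ≤ (i:ℕ) then (σ i * y i) ^ 2 else 0) := by
    rw [projGE_eq, norm_eq']
    congr 1
    refine Finset.sum_congr rfl fun i _ => ?_
    rw [WithLp.equiv_symm_apply, PiLp.toLp_apply]
    by_cases hi : r ≤ (i:ℕ) <;> simp [hi, hz i]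
  have hny : ‖y‖ = Real.sqrt (∑ i, y i ^ 2) := norm_eq' y
  have hnz2 : ‖z‖ = Real.sqrt (∑ i, (σ i * y i) ^ 2) := by
    rw [norm_eq']
    congr 1
    exact Finset.sum_congr rfl fun i _ => by rw [hz i]
  set a := ‖((stdSpanLT d r).orthogonalProjectionOnto y : Euc d)‖ with hadef
  set b := ‖((stdSpanGE d r).orthogonalProjectionOnto z : Euc d)‖ with hbdef
  have hnypos : (0:ℝ) < ‖y‖ := norm_pos_iff.2 hy0
  have hnzpos : (0:ℝ) < ‖z‖ := norm_pos_iff.2 hz0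
  -- key bound 1 : b ≤ s2 * ‖y‖
  have hb : b ≤ s2 * ‖y‖ := by
    rw [hbz, hny, ← Real.sqrt_sq hs2pos.le, ← Real.sqrt_mul (sq_nonneg s2)]
    apply Real.sqrt_le_sqrt
    rw [Finset.mul_sum]
    refine Finset.sum_le_sum fun i _ => ?_
    by_cases hi : r ≤ (i:ℕ)
    · rw [if_pos hi, mul_pow]
      have hσi : σ i ≤ s2 := hσmono (by simpa [Fin.le_def] using hi)
      have : σ i ^ 2 ≤ s2 ^ 2 := by
        apply pow_le_pow_left₀ (hσpos i).le hσi
      nlinarith [sq_nonneg (y i)]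
    · rw [if_neg hi]
      positivity
  -- key bound 2 : s1 * a ≤ ‖z‖
  have hs : s1 * a ≤ ‖z‖ := by
    rw [hay, hnz2, ← Real.sqrt_sq hs1pos.le, ← Real.sqrt_mul (sq_nonneg s1)]
    apply Real.sqrt_le_sqrt
    rw [Finset.mul_sum]
    refine Finset.sum_le_sum fun i _ => ?_
    by_cases hi : (i:ℕ) < r
    · rw [if_pos hi, mul_pow]
      have hσi : s1 ≤ σ i := hσmono (by simp [Fin.le_def]; omega)
      have : s1 ^ 2 ≤ σ i ^ 2 := by
        apply pow_le_pow_left₀ hs1pos.le hσi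
      nlinarith [sq_nonneg (y i)]
    · rw [if_neg hi, mul_zero]
      positivity
  have ha0 : 0 ≤ a := norm_nonneg _
  have hb0 : 0 ≤ b := norm_nonneg _
  rw [div_mul_div_comm, div_le_div_iff₀ (mul_pos hnypos hnzpos) hs1pos]
  calc a * b * s1 = b * (s1 * a) := by ring
    _ ≤ (s2 * ‖y‖) * ‖z‖ :=
        mul_le_mul hb hs (mul_nonneg hs1pos.le ha0) (mul_nonneg hs2pos.le (norm_nonneg y))
    _ = s2 * (‖y‖ * ‖z‖) := by ring
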